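/- (Stanley's reciprocity theorem for the chromatic polynomial) Let G be a finite simple graph with vertex set V, and let χ_G be the polynomial with χ_G(k) equal to the number of proper k-colorings of G for all positive integers k. Then for every positive integer k, (−1)^{|V|} · χ_G(−k) equals the number of pairs (x, o) where x : V → {1,…,k} is a (not necessarily proper) k-coloring and o is an acyclic orientation of G compatible with x. -/

import Mathlib

namespace StanleyRec
open Finset Polynomial SimpleGraph

variable {V : Type*} [Fintype V]

/-- number of connected components of the spanning subgraph with edge finset `S` -/
noncomputable def cc (S : Finset (Sym2 V)) : ℕ :=
  Nat.card (fromEdgeSet (↑S : Set (Sym2 V))).ConnectedComponent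

noncomputable def ES (H : SimpleGraph V) : Finset (Sym2 V) :=
  H.edgeSet.toFinite.toFinset

lemma mem_ES {H : SimpleGraph V} {e} : e ∈ ES H ↔ e ∈ H.edgeSet := Set.Finite.mem_toFinset _

noncomputable def W (H : SimpleGraph V) : Polynomial ℤ :=
  ∑ S ∈ (ES H).powerset, (-1) ^ S.card * X ^ (cc S)

lemma eq_of_reachable {α β : Type*} {G : SimpleGraph α} {f : α → β}
    (h : ∀ v w, G.Adj v w → f v = f w) {v w} (hr : G.Reachable v w) : f v = f w := by
  obtain ⟨p⟩ := hr
  induction p with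
  | nil => rfl
  | cons ha _ ih => exact (h _ _ ha).trans ih

noncomputable def ccEquiv (k : ℕ) (S : Finset (Sym2 V)) :
    {x : V → Fin k // ∀ e ∈ S, (Sym2.map x e).IsDiag} ≃
      ((fromEdgeSet (↑S : Set (Sym2 V))).ConnectedComponent → Fin k) where
  toFun x := ConnectedComponent.lift x.1 (by
    intro v w p _
    refine eq_of_reachable (f := x.1) ?_ p.reachable
    intro a b hab
    rw [fromEdgeSet_adj] at hab
    have := x.2 _ hab.1
    rwa [Sym2.map_pair_eq, Sym2.mk_isDiag_iff] at this)
  invFun y := ⟨fun v => y ((fromEdgeSet (↑S : Set (Sym2 V))).connectedComponentMk v), by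
    intro e he
    induction e with
    | _ a b =>
      rw [Sym2.map_pair_eq, Sym2.mk_isDiag_iff]
      by_cases hab : a = b
      · subst hab; rfl
      · have : (fromEdgeSet (↑S : Set (Sym2 V))).Adj a b := by
          rw [fromEdgeSet_adj]; exact ⟨by exact_mod_cast he, hab⟩
        exact congrArg y (ConnectedComponent.sound this.reachable)⟩
  left_inv x := by ext v; rfl
  right_inv y := by
    funext c
    induction c using ConnectedComponent.ind with
    | _ v => rfl

lemma card_mono_colorings (k : ℕ) (S : Finset (Sym2 V)) :
    Nat.card {x : V → Fin k // ∀ e ∈ S, (Sym2.map x e).IsDiag} = k ^ cc S := by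
  rw [Nat.card_congr (ccEquiv k S), Nat.card_fun, Nat.card_eq_fintype_card, Fintype.card_fin]
  rfl

def properSet (H : SimpleGraph V) (k : ℕ) : Set (V → Fin k) := {x | ∀ v w, H.Adj v w → x v ≠ x w}

lemma properSet_iff {H : SimpleGraph V} {k} {x : V → Fin k} :
    x ∈ properSet H k ↔ ∀ e ∈ ES H, ¬ (Sym2.map x e).IsDiag := by
  constructor
  · intro hx e he
    induction e with
    | _ a b =>
      rw [Sym2.map_pair_eq, Sym2.mk_isDiag_iff]
      exact hx a b (by rwa [mem_ES, SimpleGraph.mem_edgeSet] at he)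
  · intro hx v w hadj
    have := hx s(v,w) (mem_ES.2 (H.mem_edgeSet.2 hadj))
    rwa [Sym2.map_pair_eq, Sym2.mk_isDiag_iff] at this

lemma prod_neg'' {α : Type*} (s : Finset α) (f : α → ℤ) :
    ∏ i ∈ s, (-f i) = (-1)^s.card * ∏ i ∈ s, f i := by
  calc ∏ i ∈ s, (-f i) = ∏ i ∈ s, ((-1) * f i) := by simp
    _ = (∏ _i ∈ s, (-1:ℤ)) * ∏ i ∈ s, f i := Finset.prod_mul_distrib
    _ = _ := by rw [Finset.prod_const]

open Classical in
lemma mono_count (k : ℕ) (S : Finset (Sym2 V)) : ((k : ℤ)) ^ cc S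
    = ∑ x : V → Fin k, (if ∀ e ∈ S, (Sym2.map x e).IsDiag then (1:ℤ) else 0) := by
  classical
  rw [Finset.sum_boole]
  norm_cast
  rw [← card_mono_colorings k S, Nat.card_eq_fintype_card, Fintype.card_subtype]

lemma W_eval_nat (H : SimpleGraph V) (k : ℕ) :
    (W H).eval (k : ℤ) = (Nat.card (properSet H k) : ℤ) := by
  classical
  have hcard : ∀ S : Finset (Sym2 V), ((k : ℤ)) ^ cc S
      = ∑ x : V → Fin k, (if ∀ e ∈ S, (Sym2.map x e).IsDiag then (1:ℤ) else 0) := by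
    intro S
    rw [Finset.sum_boole]
    norm_cast
    rw [← card_mono_colorings k S, Nat.card_eq_fintype_card, Fintype.card_subtype]
  have heval : (W H).eval (k : ℤ) =
      ∑ S ∈ (ES H).powerset, (-1:ℤ)^S.card * (k:ℤ)^(cc S) := by
    rw [W, Polynomial.eval_finset_sum]
    simp
  rw [heval]
  calc ∑ S ∈ (ES H).powerset, (-1:ℤ)^S.card * (k:ℤ)^(cc S)
      = ∑ S ∈ (ES H).powerset, ∑ x : V → Fin k,
          (-1:ℤ)^S.card * (if ∀ e ∈ S, (Sym2.map x e).IsDiag then (1:ℤ) else 0) := by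
        refine Finset.sum_congr rfl fun S _ => ?_
        rw [hcard S, Finset.mul_sum]
    _ = ∑ x : V → Fin k, ∑ S ∈ (ES H).powerset,
          (-1:ℤ)^S.card * (if ∀ e ∈ S, (Sym2.map x e).IsDiag then (1:ℤ) else 0) :=
        Finset.sum_comm
    _ = ∑ x : V → Fin k, (if x ∈ properSet H k then (1:ℤ) else 0) := by
        refine Finset.sum_congr rfl fun x _ => ?_
        have hA : (∏ e ∈ ES H, ((-(if (Sym2.map x e).IsDiag then (1:ℤ) else 0)) + 1))
            = ∑ S ∈ (ES H).powerset, (-1:ℤ)^S.card * (if ∀ e ∈ S, (Sym2.map x e).IsDiag then (1:ℤ) else 0) := by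
          rw [Finset.prod_add]
          refine Finset.sum_congr rfl fun S hS => ?_
          rw [Finset.prod_const_one, mul_one, prod_neg'', Finset.prod_boole]
          simp
        have hB : (∏ e ∈ ES H, ((-(if (Sym2.map x e).IsDiag then (1:ℤ) else 0)) + 1))
            = if x ∈ properSet H k then (1:ℤ) else 0 := by
          have hpt : ∀ e ∈ ES H, (-(if (Sym2.map x e).IsDiag then (1:ℤ) else 0)) + 1
              = if ¬ (Sym2.map x e).IsDiag then (1:ℤ) else 0 := by
            intro e _; by_cases h : (Sym2.map x e).IsDiag <;> simp [h]
          rw [Finset.prod_congr rfl hpt, Finset.prod_boole]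
          by_cases hx : x ∈ properSet H k
          · rw [if_pos (properSet_iff.mp hx), if_pos hx]
          · rw [if_neg (fun h => hx (properSet_iff.mpr h)), if_neg hx]
        rw [← hA, hB]
    _ = (Nat.card (properSet H k) : ℤ) := by
        rw [Finset.sum_boole]
        norm_cast
        rw [Nat.card_eq_fintype_card]
        exact (Fintype.card_subtype _).symm


lemma poly_ext {p q : Polynomial ℤ} (h : ∀ k : ℕ, 0 < k → p.eval (k:ℤ) = q.eval (k:ℤ)) :
    p = q := by
  have hpq : p - q = 0 := by
    apply Polynomial.eq_zero_of_infinite_isRoot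
    refine (Set.Ioi_infinite (0:ℤ)).mono ?_
    intro z hz
    have hz' : (0:ℤ) < z := hz
    have hzz : ((z.toNat : ℕ) : ℤ) = z := Int.toNat_of_nonneg hz'.le
    simp only [Set.mem_setOf_eq, Polynomial.IsRoot, Polynomial.eval_sub]
    rw [← hzz, h z.toNat (by omega), sub_self]
  exact sub_eq_zero.mp hpq

lemma rel_ext {α : Type*} {R S : α → α → Prop} (h : ∀ a b, R a b ↔ S a b) : R = S :=
  funext fun a => funext fun b => propext (h a b)

lemma transGen_mono_le {α β : Type*} [Preorder β] {R : α → α → Prop} {x : α → β}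
    (hR : ∀ a b, R a b → x a ≤ x b) {a b} (h : Relation.TransGen R a b) : x a ≤ x b := by
  induction h with
  | single h => exact hR _ _ h
  | tail _ h ih => exact ih.trans (hR _ _ h)

lemma transGen_restrict_of_cycle {α β : Type*} [PartialOrder β] {R : α → α → Prop} {x : α → β}
    (hR : ∀ a b, R a b → x a ≤ x b) {a b} (h : Relation.TransGen R a b) (hba : x b ≤ x a) :
    Relation.TransGen (fun p q => R p q ∧ x p = x q) a b := by
  induction h with
  | single h1 => exact .single ⟨h1, le_antisymm (hR _ _ h1) hba⟩
  | @tail c d hac hcd ih =>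
      have hxc : x a ≤ x c := transGen_mono_le hR hac
      have hcble : x c ≤ x d := hR _ _ hcd
      have h2 : x c ≤ x a := hcble.trans hba
      exact (ih h2).tail ⟨hcd, le_antisymm hcble (hba.trans hxc)⟩

lemma transGen_notMem {α : Type*} {R : α → α → Prop} {U : Set α}
    (hU : ∀ u ∈ U, ∀ w, ¬ R w u) {a b} (h : Relation.TransGen R a b) : b ∉ U := by
  cases h with
  | single h1 => exact fun hb => hU _ hb _ h1
  | tail _ h1 => exact fun hb => hU _ hb _ h1

lemma transGen_restrict_compl {α : Type*} {R : α → α → Prop} {U : Set α}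
    (hU : ∀ u ∈ U, ∀ w, ¬ R w u) {a b} (h : Relation.TransGen R a b) (ha : a ∉ U) :
    Relation.TransGen (fun p q => R p q ∧ p ∉ U ∧ q ∉ U) a b := by
  induction h with
  | single h1 => exact .single ⟨h1, ha, fun hb => hU _ hb _ h1⟩
  | @tail c d hac hcd ih =>
      exact ih.tail ⟨hcd, transGen_notMem hU hac, fun hb => hU _ hb _ hcd⟩

def orientSet {α : Type*} (H : SimpleGraph α) : Set (α → α → Prop) :=
  {D | (∀ v w, D v w → H.Adj v w) ∧ (∀ v w, H.Adj v w → (D v w ↔ ¬ D w v)) ∧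
    ∀ v, ¬ Relation.TransGen D v v}

/-- the graph of monochromatic edges of a coloring -/
def monoGraph (G : SimpleGraph V) {k : ℕ} (x : V → Fin k) : SimpleGraph V where
  Adj a b := G.Adj a b ∧ x a = x b
  symm := ⟨fun a b h => ⟨h.1.symm, h.2.symm⟩⟩
  loopless := ⟨fun a h => G.loopless.irrefl a h.1⟩

/-- pairs bijection: compatible acyclic orientations of `G` correspond to
acyclic orientations of the monochromatic graph -/
noncomputable def pairEquiv (G : SimpleGraph V) {k : ℕ} (x : V → Fin k) :
    {D : V → V → Prop // (∀ v w, D v w → G.Adj v w) ∧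
      (∀ v w, G.Adj v w → (D v w ↔ ¬ D w v)) ∧
      (∀ v, ¬ Relation.TransGen D v v) ∧ (∀ v w, D v w → x v ≤ x w)} ≃
    orientSet (monoGraph G x) where
  toFun D := ⟨fun a b => D.1 a b ∧ x a = x b, by
    obtain ⟨hsup, hor, hac, hcomp⟩ := D.2
    refine ⟨fun a b h => ⟨hsup _ _ h.1, h.2⟩, fun a b hadj => ?_, fun v hv => hac v ?_⟩
    · have := hor a b hadj.1
      constructor
      · rintro ⟨h1, -⟩ ⟨h2, -⟩; exact (this.mp h1) h2
      · intro h; refine ⟨this.mpr (fun h2 => h ⟨h2, hadj.2.symm⟩), hadj.2⟩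
    · exact Relation.TransGen.mono (fun a b h => h.1) _ _ hv⟩
  invFun D := ⟨fun a b => D.1 a b ∨ (G.Adj a b ∧ x a < x b), by
    obtain ⟨hsup, hor, hac⟩ := D.2
    have hxeq : ∀ a b, D.1 a b → x a = x b := fun a b h => (hsup a b h).2
    have hcomp : ∀ a b, D.1 a b ∨ (G.Adj a b ∧ x a < x b) → x a ≤ x b := by
      rintro a b (h | h)
      · exact (hxeq a b h).le
      · exact h.2.le
    refine ⟨?_, ?_, ?_, hcomp⟩
    · rintro a b (h | h)
      · exact (hsup a b h).1
      · exact h.1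
    · intro a b hadj
      rcases lt_trichotomy (x a) (x b) with hlt | heq | hgt
      · constructor
        · rintro - (h | h)
          · exact absurd (hxeq _ _ h) (ne_of_gt hlt)
          · exact absurd h.2 (asymm hlt)
        · intro _; exact Or.inr ⟨hadj, hlt⟩
      · have hmadj : (monoGraph G x).Adj a b := ⟨hadj, heq⟩
        have := hor a b hmadj
        constructor
        · rintro (h | h) (h2 | h2)
          · exact (this.mp h) h2
          · exact absurd h2.2 (not_lt_of_ge heq.le)
          · exact absurd h.2 (not_lt_of_ge heq.ge)
          · exact absurd h2.2 (not_lt_of_ge heq.le)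
        · intro h
          left
          refine this.mpr (fun h2 => h (Or.inl h2))
      · constructor
        · rintro (h | h)
          · exact absurd (hxeq _ _ h) (ne_of_gt hgt)
          · exact absurd h.2 (asymm hgt)
        · intro h; exact absurd (Or.inr ⟨hadj.symm, hgt⟩) h
    · intro v hv
      refine hac v ?_
      have := transGen_restrict_of_cycle (hcomp) hv (le_refl _)
      refine Relation.TransGen.mono ?_ _ _ this
      rintro a b ⟨(h | h), heq⟩
      · exact h
      · exact absurd h.2 (not_lt_of_ge heq.ge)⟩
  left_inv D := by
    obtain ⟨hsup, hor, hac, hcomp⟩ := D.2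
    refine Subtype.ext (rel_ext fun a b => ?_)
    constructor
    · rintro (⟨h, -⟩ | ⟨hadj, hlt⟩)
      · exact h
      · refine (hor a b hadj).mpr (fun h2 => absurd (hcomp _ _ h2) (not_le_of_gt hlt))
    · intro h
      rcases eq_or_lt_of_le (hcomp _ _ h) with heq | hlt
      · exact Or.inl ⟨h, heq⟩
      · exact Or.inr ⟨hsup _ _ h, hlt⟩
  right_inv D := by
    obtain ⟨hsup, hor, hac⟩ := D.2
    refine Subtype.ext (rel_ext fun a b => ?_)
    constructor
    · rintro ⟨(h | h), heq⟩
      · exact h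
      · exact absurd h.2 (not_lt_of_ge heq.ge)
    · intro h
      exact ⟨Or.inl h, (hsup _ _ h).2⟩


lemma transGen_subtype {α : Type*} {s : Set α} {D : ↥s → ↥s → Prop} {a b : α}
    (h : Relation.TransGen (fun p q => ∃ (hp : p ∈ s) (hq : q ∈ s), D ⟨p,hp⟩ ⟨q,hq⟩) a b) :
    ∀ (ha : a ∈ s) (hb : b ∈ s), Relation.TransGen D ⟨a,ha⟩ ⟨b,hb⟩ := by
  induction h with
  | single h1 =>
      intro ha hb
      obtain ⟨hp, hq, hd⟩ := h1
      exact .single hd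
  | @tail c d hac hcd ih =>
      intro ha hb
      obtain ⟨hc', hb', hd⟩ := hcd
      exact (ih ha hc').tail hd

/-- deleting an independent set of sources -/
noncomputable def sourceEquiv (H : SimpleGraph V) (U : Set V)
    (hU : ∀ a ∈ U, ∀ b ∈ U, ¬ H.Adj a b) :
    {D : V → V → Prop // D ∈ orientSet H ∧ ∀ u ∈ U, ∀ w, ¬ D w u} ≃
      ↥(orientSet (H.induce Uᶜ)) where
  toFun D := ⟨fun a b => D.1 ↑a ↑b, by
    obtain ⟨⟨hsup, hor, hac⟩, hsrc⟩ := D.2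
    refine ⟨fun a b h => hsup _ _ h, fun a b hadj => hor _ _ hadj, fun v hv => hac ↑v ?_⟩
    exact Relation.TransGen.lift (fun p : ↥(Uᶜ : Set V) => (p : V)) (fun a b h => h) _ _ hv⟩
  invFun D := ⟨fun a b => H.Adj a b ∧ (a ∈ U ∨ ∃ (ha : a ∉ U) (hb : b ∉ U),
      D.1 ⟨a, ha⟩ ⟨b, hb⟩), by
    obtain ⟨hsup, hor, hac⟩ := D.2
    have hsrc : ∀ u ∈ U, ∀ w, ¬ (H.Adj w u ∧ (w ∈ U ∨ ∃ (ha : w ∉ U) (hb : u ∉ U),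
        D.1 ⟨w, ha⟩ ⟨u, hb⟩)) := by
      rintro u hu w ⟨hadj, (hw | ⟨hw, hu', -⟩)⟩
      · exact hU w hw u hu hadj
      · exact hu' hu
    have htgt : ∀ a b, (H.Adj a b ∧ (a ∈ U ∨ ∃ (ha : a ∉ U) (hb : b ∉ U),
        D.1 ⟨a, ha⟩ ⟨b, hb⟩)) → b ∉ U := by
      rintro a b ⟨hadj, (ha | ⟨-, hb, -⟩)⟩
      · exact fun hb => hU a ha b hb hadj
      · exact hb
    refine ⟨⟨fun a b h => h.1, ?_, ?_⟩, hsrc⟩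
    · intro a b hadj
      by_cases ha : a ∈ U
      · by_cases hb : b ∈ U
        · exact absurd hadj (hU a ha b hb)
        · constructor
          · rintro - ⟨-, (h | ⟨-, h, -⟩)⟩
            · exact hb h
            · exact h ha
          · intro _; exact ⟨hadj, Or.inl ha⟩
      · by_cases hb : b ∈ U
        · constructor
          · rintro ⟨-, (h | ⟨-, h, -⟩)⟩ <;> [exact absurd h ha; exact absurd hb h]
          · intro h; exact absurd ⟨hadj.symm, Or.inl hb⟩ h
        · have hor' := hor ⟨a, ha⟩ ⟨b, hb⟩ hadj
          constructor
          · rintro ⟨-, (h | ⟨ha', hb', hd⟩)⟩ ⟨-, (h2 | ⟨hb2, ha2, hd2⟩)⟩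
            · exact ha h
            · exact ha h
            · exact hb h2
            · exact (hor'.mp hd) hd2
          · intro h
            refine ⟨hadj, Or.inr ⟨ha, hb, hor'.mpr (fun hd => h ⟨hadj.symm, Or.inr ⟨hb, ha, hd⟩⟩)⟩⟩
    · intro v hv
      have hv' : v ∉ U := transGen_notMem hsrc hv
      have h2 := transGen_restrict_compl hsrc hv hv'
      have h3 : Relation.TransGen (fun p q => ∃ (hp : p ∈ (Uᶜ : Set V)) (hq : q ∈ (Uᶜ : Set V)),
          D.1 ⟨p,hp⟩ ⟨q,hq⟩) v v := by
        refine Relation.TransGen.mono ?_ _ _ h2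
        rintro p q ⟨⟨hadj, (hp | ⟨hp', hq', hd⟩)⟩, hp2, hq2⟩
        · exact absurd hp hp2
        · exact ⟨hp', hq', hd⟩
      exact hac ⟨v, hv'⟩ (transGen_subtype h3 hv' hv')⟩
  left_inv D := by
    obtain ⟨⟨hsup, hor, hac⟩, hsrc⟩ := D.2
    refine Subtype.ext (rel_ext fun a b => ?_)
    constructor
    · rintro ⟨hadj, (ha | ⟨ha, hb, hd⟩)⟩
      · exact (hor a b hadj).mpr (fun h => hsrc a ha b h)
      · exact hd
    · intro h
      have hadj := hsup _ _ h
      by_cases ha : a ∈ U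
      · exact ⟨hadj, Or.inl ha⟩
      · have hb : b ∉ U := fun hb => hsrc b hb a h
        exact ⟨hadj, Or.inr ⟨ha, hb, h⟩⟩
  right_inv D := by
    obtain ⟨hsup, hor, hac⟩ := D.2
    refine Subtype.ext (rel_ext fun a b => ?_)
    constructor
    · rintro ⟨hadj, (ha | ⟨ha, hb, hd⟩)⟩
      · exact absurd ha a.2
      · exact hd
    · intro h
      exact ⟨hsup _ _ h, Or.inr ⟨a.2, b.2, h⟩⟩


open Classical in
noncomputable def indepFinsets (H : SimpleGraph V) : Finset (Finset V) :=
  univ.filter (fun U => ∀ a ∈ U, ∀ b ∈ U, ¬ H.Adj a b)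

lemma mem_indepFinsets {H : SimpleGraph V} {U : Finset V} :
    U ∈ indepFinsets H ↔ ∀ a ∈ U, ∀ b ∈ U, ¬ H.Adj a b := by
  classical
  simp [indepFinsets]

noncomputable def colorEquiv0 (H : SimpleGraph V) (m : ℕ) :
    {x : V → Fin (m+1) // x ∈ properSet H (m+1) ∧ ∀ v, (x v = Fin.last m ↔ v ∈ (∅ : Finset V))} ≃
      {y : V → Fin m // y ∈ properSet H m} where
  toFun x := ⟨fun v => (x.1 v).castPred (fun h => by simpa using (x.2.2 v).mp h),
    fun a b h heq => x.2.1 a b h (Fin.castPred_inj.mp heq)⟩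
  invFun y := ⟨fun v => (y.1 v).castSucc,
    ⟨fun a b h heq => y.2 a b h (Fin.castSucc_inj.mp heq),
     fun v => by simpa using (Fin.castSucc_lt_last (y.1 v)).ne⟩⟩
  left_inv x := Subtype.ext (funext fun v =>
    Fin.castSucc_castPred (x.1 v) (fun h => by simpa using (x.2.2 v).mp h))
  right_inv y := Subtype.ext (funext fun v =>
    Fin.castPred_castSucc ((Fin.castSucc_lt_last (y.1 v)).ne))

open Classical in
noncomputable def colorEquiv (H : SimpleGraph V) (m : ℕ) (U : Finset V)
    (hind : ∀ a ∈ U, ∀ b ∈ U, ¬ H.Adj a b) :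
    {x : V → Fin (m+1) // x ∈ properSet H (m+1) ∧ ∀ v, (x v = Fin.last m ↔ v ∈ U)} ≃
      {y : (((↑U : Set V)ᶜ : Set V)) → Fin m //
        y ∈ properSet (H.induce ((↑U : Set V)ᶜ)) m} where
  toFun x := ⟨fun v => (x.1 ↑v).castPred (by
      exact fun h => v.2 ((x.2.2 ↑v).mp h)),
    fun a b hadj heq => x.2.1 ↑a ↑b hadj (Fin.castPred_inj.mp heq)⟩
  invFun y := ⟨fun v => if hv : v ∈ U then Fin.last m
      else ((y.1 ⟨v, hv⟩).castSucc), by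
    constructor
    · intro a b hadj heq
      by_cases ha : a ∈ U <;> by_cases hb : b ∈ U
      · exact hind a ha b hb hadj
      · simp only [dif_pos ha, dif_neg hb] at heq
        exact (Fin.castSucc_lt_last _).ne' heq
      · simp only [dif_neg ha, dif_pos hb] at heq
        exact (Fin.castSucc_lt_last _).ne heq
      · simp only [dif_neg ha, dif_neg hb] at heq
        refine y.2 ⟨a, ha⟩ ⟨b, hb⟩ hadj
          (Fin.castSucc_inj.mp heq)
    · intro v
      by_cases hv : v ∈ U
      · simp only [dif_pos hv]; simpa using hv
      · simp only [dif_neg hv]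
        constructor
        · intro h; exact absurd h (Fin.castSucc_lt_last _).ne
        · intro h; exact absurd h hv⟩
  left_inv x := by
    refine Subtype.ext (funext fun v => ?_)
    by_cases hv : v ∈ U
    · simp only [dif_pos hv]; exact ((x.2.2 v).mpr hv).symm
    · simp only [dif_neg hv]; exact Fin.castSucc_castPred _ (fun h => hv ((x.2.2 v).mp h))
  right_inv y := by
    refine Subtype.ext (funext fun v => ?_)
    have hv : (↑v : V) ∉ U := v.2
    simp only [dif_neg hv]
    exact Fin.castPred_castSucc ((Fin.castSucc_lt_last _).ne)

lemma ncard_filter {α : Type*} [Fintype α] (p : α → Prop) [DecidablePred p] :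
    (univ.filter p).card = Nat.card {x // p x} := by
  rw [Nat.card_eq_fintype_card, Fintype.card_subtype]

open Classical in
lemma C_rec (H : SimpleGraph V) (m : ℕ) :
    (Nat.card (properSet H (m+1)) : ℤ) =
      (Nat.card (properSet H m) : ℤ) +
      ∑ U ∈ (indepFinsets H).erase ∅,
        (Nat.card (properSet (H.induce ((↑U : Set V)ᶜ)) m) : ℤ) := by
  classical
  have hpart : (univ.filter (fun x : V → Fin (m+1) => x ∈ properSet H (m+1))).card
      = ∑ U ∈ (univ : Finset (Finset V)),
          (univ.filter (fun x : V → Fin (m+1) =>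
            x ∈ properSet H (m+1) ∧ ∀ v, (x v = Fin.last m ↔ v ∈ U))).card := by
    rw [Finset.card_eq_sum_card_fiberwise
      (f := fun x => univ.filter (fun v => x v = Fin.last m)) (fun x _ => mem_univ _)]
    refine Finset.sum_congr rfl fun U _ => ?_
    congr 1
    rw [Finset.filter_filter]
    refine Finset.filter_congr fun x _ => ?_
    constructor
    · rintro ⟨h1, h2⟩
      refine ⟨h1, fun v => ?_⟩
      rw [← h2]; simp
    · rintro ⟨h1, h2⟩
      refine ⟨h1, ?_⟩
      ext v; simp [h2 v]
  have hzero : ∀ U : Finset V, U ∉ indepFinsets H →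
      (univ.filter (fun x : V → Fin (m+1) =>
        x ∈ properSet H (m+1) ∧ ∀ v, (x v = Fin.last m ↔ v ∈ U))).card = 0 := by
    intro U hU
    rw [Finset.card_eq_zero, Finset.filter_eq_empty_iff]
    rintro x - ⟨h1, h2⟩
    rw [mem_indepFinsets] at hU
    push_neg at hU
    obtain ⟨a, ha, b, hb, hadj⟩ := hU
    exact h1 a b hadj (((h2 a).mpr ha).trans ((h2 b).mpr hb).symm)
  have hterm : ∀ U ∈ (indepFinsets H).erase ∅,
      (univ.filter (fun x : V → Fin (m+1) =>
        x ∈ properSet H (m+1) ∧ ∀ v, (x v = Fin.last m ↔ v ∈ U))).card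
      = Nat.card (properSet (H.induce ((↑U : Set V)ᶜ)) m) := by
    intro U hU
    rw [ncard_filter]
    exact Nat.card_congr (colorEquiv H m U (mem_indepFinsets.mp (Finset.mem_of_mem_erase hU)))
  have hzeroterm : (univ.filter (fun x : V → Fin (m+1) =>
      x ∈ properSet H (m+1) ∧ ∀ v, (x v = Fin.last m ↔ v ∈ (∅ : Finset V)))).card
      = Nat.card (properSet H m) := by
    rw [ncard_filter]
    exact Nat.card_congr (colorEquiv0 H m)
  have hPC : Nat.card (properSet H (m+1))
      = (univ.filter (fun x : V → Fin (m+1) => x ∈ properSet H (m+1))).card :=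
    (ncard_filter _).symm
  have hsplit : ∑ U ∈ (univ : Finset (Finset V)),
      ((univ.filter (fun x : V → Fin (m+1) =>
        x ∈ properSet H (m+1) ∧ ∀ v, (x v = Fin.last m ↔ v ∈ U))).card : ℤ)
      = (Nat.card (properSet H m) : ℤ) + ∑ U ∈ (indepFinsets H).erase ∅,
          (Nat.card (properSet (H.induce ((↑U : Set V)ᶜ)) m) : ℤ) := by
    rw [← Finset.sum_subset (Finset.subset_univ (indepFinsets H))
      (by intro U _ hU; exact_mod_cast hzero U hU)]
    have hmem : ∅ ∈ indepFinsets H := mem_indepFinsets.mpr (by simp)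
    rw [← Finset.add_sum_erase _ _ hmem, hzeroterm]
    congr 1
    refine Finset.sum_congr rfl fun U hU => ?_
    rw [hterm U hU]
  rw [hPC]
  rw_mod_cast [hpart]
  exact_mod_cast hsplit



lemma card_compl_finset (U : Finset V) :
    Nat.card ↥((↑U : Set V)ᶜ) = Fintype.card V - U.card := by
  classical
  rw [Nat.card_coe_set_eq, Set.ncard_eq_toFinset_card', Set.toFinset_compl,
    Finset.card_compl, Finset.toFinset_coe]

open Classical in
lemma sum_erase_powerset {α : Type*} (T : Finset α) (hT : T.Nonempty) :
    ∑ U ∈ T.powerset.erase ∅, (-1:ℤ)^(U.card+1) = 1 := by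
  classical
  have h0 : ∑ U ∈ T.powerset, (-1:ℤ)^U.card = 0 := by
    rw [Finset.sum_powerset_neg_one_pow_card, if_neg (Finset.nonempty_iff_ne_empty.mp hT)]
  have h2 := Finset.add_sum_erase T.powerset (fun U => (-1:ℤ)^U.card)
    (Finset.empty_mem_powerset T)
  rw [h0] at h2
  simp only [Finset.card_empty, pow_zero] at h2
  have h3 : ∑ U ∈ T.powerset.erase ∅, (-1:ℤ)^U.card = -1 := by linarith
  have h4 : ∀ U : Finset α, (-1:ℤ)^(U.card+1) = -((-1)^U.card) := by intro U; ring
  rw [Finset.sum_congr rfl (fun U _ => h4 U), Finset.sum_neg_distrib, h3]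
  norm_num

lemma exists_source [Nonempty V] {D : V → V → Prop}
    (hac : ∀ v, ¬ Relation.TransGen D v v) : ∃ v, ∀ w, ¬ D w v := by
  haveI : IsIrrefl V (Relation.TransGen D) := ⟨hac⟩
  have hwf : WellFounded (Relation.TransGen D) :=
    Finite.wellFounded_of_trans_of_irrefl _
  obtain ⟨v, -, hv⟩ := hwf.has_min Set.univ ⟨Classical.arbitrary V, trivial⟩
  exact ⟨v, fun w hw => hv w trivial (.single hw)⟩

open Classical in
lemma orient_IE (H : SimpleGraph V) (hV : 0 < Fintype.card V) :
    (Nat.card (orientSet H) : ℤ) =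
      ∑ U ∈ ((univ : Finset (Finset V)).erase ∅), (-1:ℤ)^(U.card+1) *
        (Nat.card {D : V → V → Prop // D ∈ orientSet H ∧ ∀ u ∈ U, ∀ w, ¬ D w u} : ℤ) := by
  classical
  haveI : Nonempty V := Fintype.card_pos_iff.mp hV
  have hcard : (Nat.card (orientSet H) : ℤ)
      = ∑ D ∈ univ.filter (· ∈ orientSet H), (1:ℤ) := by
    rw [Finset.sum_const, nsmul_eq_mul, mul_one, ncard_filter]
  rw [hcard]
  have hone : ∀ D ∈ univ.filter (· ∈ orientSet H), (1:ℤ) =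
      ∑ U ∈ ((univ : Finset (Finset V)).erase ∅),
        (if (∀ u ∈ U, ∀ w, ¬ D w u) then (-1:ℤ)^(U.card+1) else 0) := by
    intro D hD
    obtain ⟨hsup, hor, hac⟩ : D ∈ orientSet H := (Finset.mem_filter.mp hD).2
    have hsrcne : (univ.filter (fun v => ∀ w, ¬ D w v)).Nonempty := by
      obtain ⟨v, hv⟩ := exists_source hac
      exact ⟨v, Finset.mem_filter.mpr ⟨mem_univ _, hv⟩⟩
    have hset : ((univ : Finset (Finset V)).erase ∅).filter
          (fun U : Finset V => ∀ u ∈ U, ∀ w, ¬ D w u)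
        = (univ.filter (fun v => ∀ w, ¬ D w v)).powerset.erase ∅ := by
      ext U
      constructor
      · intro hU
        have h1 := Finset.mem_erase.mp (Finset.mem_of_mem_filter U hU)
        have h2 := (Finset.mem_filter.mp hU).2
        exact Finset.mem_erase.mpr ⟨h1.1, Finset.mem_powerset.mpr
          (fun u hu => Finset.mem_filter.mpr ⟨mem_univ _, h2 u hu⟩)⟩
      · intro hU
        have h1 := Finset.mem_erase.mp hU
        refine Finset.mem_filter.mpr ⟨Finset.mem_erase.mpr ⟨h1.1, mem_univ _⟩,
          fun u hu => (Finset.mem_filter.mp (Finset.mem_powerset.mp h1.2 hu)).2⟩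
    rw [← Finset.sum_filter, hset]
    exact (sum_erase_powerset _ hsrcne).symm
  rw [Finset.sum_congr rfl hone, Finset.sum_comm]
  refine Finset.sum_congr rfl fun U _ => ?_
  rw [Finset.sum_ite, Finset.sum_const_zero, add_zero, Finset.sum_const, nsmul_eq_mul,
    Finset.filter_filter,
    ncard_filter (fun D : V → V → Prop => D ∈ orientSet H ∧ ∀ u ∈ U, ∀ w, ¬ D w u), mul_comm]

lemma srcCount_indep (H : SimpleGraph V) (U : Finset V)
    (hind : ∀ a ∈ U, ∀ b ∈ U, ¬ H.Adj a b) :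
    Nat.card {D : V → V → Prop // D ∈ orientSet H ∧ ∀ u ∈ U, ∀ w, ¬ D w u}
      = Nat.card (orientSet (H.induce ((↑U : Set V)ᶜ))) := by
  refine Nat.card_congr (Equiv.trans ?_ (sourceEquiv H (↑U : Set V)
    (fun a ha b hb => hind a ha b hb)))
  exact Equiv.subtypeEquivRight (by intro D; simp)

lemma srcCount_dep (H : SimpleGraph V) (U : Finset V)
    (hdep : ¬ ∀ a ∈ U, ∀ b ∈ U, ¬ H.Adj a b) :
    Nat.card {D : V → V → Prop // D ∈ orientSet H ∧ ∀ u ∈ U, ∀ w, ¬ D w u} = 0 := by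
  push_neg at hdep
  obtain ⟨a, ha, b, hb, hadj⟩ := hdep
  rw [Nat.card_eq_zero]
  left
  refine ⟨fun D => ?_⟩
  obtain ⟨⟨hsup, hor, hac⟩, hsrc⟩ := D.2
  exact hsrc b hb a ((hor a b hadj).mpr (hsrc a ha b))

lemma W_eval_zero (H : SimpleGraph V) (hV : 0 < Fintype.card V) :
    (W H).eval 0 = 0 := by
  haveI : Nonempty V := Fintype.card_pos_iff.mp hV
  rw [W, Polynomial.eval_finset_sum]
  refine Finset.sum_eq_zero fun S _ => ?_
  have hcc : cc S ≠ 0 := by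
    haveI : Nonempty (fromEdgeSet (↑S : Set (Sym2 V))).ConnectedComponent :=
      ⟨(fromEdgeSet (↑S : Set (Sym2 V))).connectedComponentMk (Classical.arbitrary V)⟩
    exact Nat.card_pos.ne'
  simp [zero_pow hcc]

open Classical in
lemma W_rec (H : SimpleGraph V) :
    W H = (W H).comp (X - 1) +
      ∑ U ∈ (indepFinsets H).erase ∅, (W (H.induce ((↑U : Set V)ᶜ))).comp (X - 1) := by
  refine poly_ext fun k hk => ?_
  obtain ⟨m, rfl⟩ : ∃ m, k = m + 1 := ⟨k - 1, by omega⟩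
  have he : Polynomial.eval ((m+1 : ℕ) : ℤ) (X - 1 : Polynomial ℤ) = (m : ℕ) := by
    push_cast; simp
  rw [Polynomial.eval_add, Polynomial.eval_finset_sum]
  simp only [Polynomial.eval_comp, he]
  rw [W_eval_nat, W_eval_nat, C_rec H m]
  congr 1
  refine Finset.sum_congr rfl fun U _ => ?_
  rw [W_eval_nat]


universe u

open Classical in
lemma A_eq_a : ∀ (n : ℕ) (V : Type u) [Fintype V] (H : SimpleGraph V),
    Nat.card V = n →
    (-1:ℤ)^(Nat.card V) * (W H).eval (-1) = (Nat.card (orientSet H) : ℤ) := by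
  intro n
  induction n using Nat.strong_induction_on with
  | _ n IH =>
    intro V _ H hn
    rcases Nat.eq_zero_or_pos n with h0 | hpos
    · subst h0
      haveI : IsEmpty V := by
        rw [Nat.card_eq_fintype_card] at hn
        exact Fintype.card_eq_zero_iff.mp hn
      have hES : ES H = ∅ :=
        Finset.eq_empty_of_forall_notMem (fun e _ => (IsEmpty.false e).elim)
      have hW : W H = 1 := by
        rw [W, hES, Finset.powerset_empty, Finset.sum_singleton]
        have hcc : cc (∅ : Finset (Sym2 V)) = 0 := Nat.card_of_isEmpty
        rw [hcc]
        simp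
      have hor : Nat.card (orientSet H) = 1 := by
        rw [Nat.card_eq_one_iff_unique]
        refine ⟨⟨fun D E => Subtype.ext (funext fun v => isEmptyElim v)⟩,
          ⟨⟨fun _ _ => False, fun v => isEmptyElim v, fun v => isEmptyElim v,
            fun v => isEmptyElim v⟩⟩⟩
      rw [hn, hW, hor]
      norm_num
    · haveI hne : Nonempty V := by
        have : 0 < Nat.card V := hn ▸ hpos
        exact (Nat.card_pos_iff.mp this).1
      have hcV : 0 < Fintype.card V := Fintype.card_pos
      have h0 : (0:ℤ) = (W H).eval (-1) +
          ∑ U ∈ (indepFinsets H).erase ∅, (W (H.induce ((↑U : Set V)ᶜ))).eval (-1) := by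
        have hc := congrArg (Polynomial.eval (0:ℤ)) (W_rec H)
        rw [W_eval_zero H hcV] at hc
        rw [Polynomial.eval_add, Polynomial.eval_finset_sum] at hc
        simpa [Polynomial.eval_comp] using hc
      have hWH : (W H).eval (-1) = - ∑ U ∈ (indepFinsets H).erase ∅,
          (W (H.induce ((↑U : Set V)ᶜ))).eval (-1) := by linarith
      have hsign : ∀ b : ℕ, b ≤ Nat.card V →
          -((-1:ℤ)^(Nat.card V)) = (-1:ℤ)^(b+1) * (-1)^(Nat.card V - b) := by
        intro b hb
        rw [← pow_add]
        have hbe : b + 1 + (Nat.card V - b) = Nat.card V + 1 := by omega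
        rw [hbe, pow_succ]
        ring
      calc (-1:ℤ)^(Nat.card V) * (W H).eval (-1)
          = ∑ U ∈ (indepFinsets H).erase ∅, -((-1:ℤ)^(Nat.card V)) *
              (W (H.induce ((↑U : Set V)ᶜ))).eval (-1) := by
            rw [hWH, mul_neg, ← neg_mul, Finset.mul_sum]
        _ = ∑ U ∈ (indepFinsets H).erase ∅, (-1:ℤ)^(U.card+1) *
              ((Nat.card (orientSet (H.induce ((↑U : Set V)ᶜ))) : ℤ)) := by
            refine Finset.sum_congr rfl fun U hU => ?_
            have hUne : U.Nonempty := Finset.nonempty_of_ne_empty (Finset.mem_erase.mp hU).1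
            have hUle : U.card ≤ Nat.card V := by
              rw [Nat.card_eq_fintype_card]
              exact Finset.card_le_univ U
            have hm : Nat.card ↥((↑U : Set V)ᶜ) = Nat.card V - U.card := by
              rw [card_compl_finset, Nat.card_eq_fintype_card]
            have hlt : Nat.card V - U.card < n := by
              have h1 : 0 < U.card := Finset.card_pos.mpr hUne
              omega
            have := IH (Nat.card V - U.card) (by omega) ↥((↑U : Set V)ᶜ)
              (H.induce ((↑U : Set V)ᶜ)) hm
            rw [hm] at this
            rw [hsign U.card hUle, mul_assoc, this]
        _ = ∑ U ∈ (indepFinsets H).erase ∅, (-1:ℤ)^(U.card+1) *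
              (Nat.card {D : V → V → Prop // D ∈ orientSet H ∧ ∀ u ∈ U, ∀ w, ¬ D w u} : ℤ) := by
            refine Finset.sum_congr rfl fun U hU => ?_
            rw [srcCount_indep H U (mem_indepFinsets.mp (Finset.mem_of_mem_erase hU))]
        _ = ∑ U ∈ ((univ : Finset (Finset V)).erase ∅), (-1:ℤ)^(U.card+1) *
              (Nat.card {D : V → V → Prop // D ∈ orientSet H ∧ ∀ u ∈ U, ∀ w, ¬ D w u} : ℤ) := by
            refine Finset.sum_subset ?_ ?_
            · exact Finset.erase_subset_erase _ (Finset.subset_univ _)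
            · intro U hU hU2
              have : ¬ ∀ a ∈ U, ∀ b ∈ U, ¬ H.Adj a b := by
                intro h
                exact hU2 (Finset.mem_erase.mpr ⟨(Finset.mem_erase.mp hU).1,
                  mem_indepFinsets.mpr h⟩)
              rw [srcCount_dep H U this]
              norm_num
        _ = (Nat.card (orientSet H) : ℤ) := (orient_IE H hcV).symm


lemma powerset_filter {α : Type*} (E : Finset α) (p : α → Prop) [DecidablePred p] :
    (E.filter p).powerset = E.powerset.filter (fun S => ∀ e ∈ S, p e) := by
  ext S
  simp only [Finset.mem_powerset, Finset.mem_filter, Finset.subset_iff]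
  constructor
  · intro h
    exact ⟨fun a ha => (h ha).1, fun a ha => (h ha).2⟩
  · rintro ⟨h1, h2⟩ a ha
    exact ⟨h1 ha, h2 a ha⟩

open Classical in
lemma ES_mono (G : SimpleGraph V) {k : ℕ} (x : V → Fin k) :
    ES (monoGraph G x) = (ES G).filter (fun e => (Sym2.map x e).IsDiag) := by
  ext e
  induction e with
  | _ a b =>
    rw [mem_ES, Finset.mem_filter, mem_ES]
    rw [SimpleGraph.mem_edgeSet, SimpleGraph.mem_edgeSet]
    rw [Sym2.map_pair_eq, Sym2.mk_isDiag_iff]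
    exact Iff.rfl

open Classical in
lemma W_eval_neg (G : SimpleGraph V) (k : ℕ) :
    (W G).eval (-(k:ℤ)) = ∑ x : V → Fin k, (W (monoGraph G x)).eval (-1) := by
  classical
  have hL : (W G).eval (-(k:ℤ))
      = ∑ S ∈ (ES G).powerset, ((-1:ℤ)^S.card * (-1)^(cc S)) * (k:ℤ)^(cc S) := by
    rw [W, Polynomial.eval_finset_sum]
    refine Finset.sum_congr rfl fun S _ => ?_
    rw [Polynomial.eval_mul, Polynomial.eval_pow, Polynomial.eval_pow,
      Polynomial.eval_neg, Polynomial.eval_one, Polynomial.eval_X, neg_pow]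
    push_cast
    ring
  have hR : ∀ x : V → Fin k, (W (monoGraph G x)).eval (-1)
      = ∑ S ∈ ((ES G).filter (fun e => (Sym2.map x e).IsDiag)).powerset,
          ((-1:ℤ)^S.card * (-1)^(cc S)) := by
    intro x
    rw [W, ES_mono, Polynomial.eval_finset_sum]
    refine Finset.sum_congr rfl fun S _ => ?_
    rw [Polynomial.eval_mul, Polynomial.eval_pow, Polynomial.eval_pow,
      Polynomial.eval_neg, Polynomial.eval_one, Polynomial.eval_X]
  rw [hL]
  calc ∑ S ∈ (ES G).powerset, ((-1:ℤ)^S.card * (-1)^(cc S)) * (k:ℤ)^(cc S)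
      = ∑ S ∈ (ES G).powerset, ∑ x : V → Fin k, ((-1:ℤ)^S.card * (-1)^(cc S)) *
          (if ∀ e ∈ S, (Sym2.map x e).IsDiag then (1:ℤ) else 0) := by
        refine Finset.sum_congr rfl fun S _ => ?_
        rw [mono_count k S, Finset.mul_sum]
    _ = ∑ x : V → Fin k, ∑ S ∈ (ES G).powerset, ((-1:ℤ)^S.card * (-1)^(cc S)) *
          (if ∀ e ∈ S, (Sym2.map x e).IsDiag then (1:ℤ) else 0) := Finset.sum_comm
    _ = ∑ x : V → Fin k, (W (monoGraph G x)).eval (-1) := by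
        refine Finset.sum_congr rfl fun x _ => ?_
        rw [hR x, powerset_filter]
        rw [Finset.sum_filter]
        refine Finset.sum_congr rfl fun S _ => ?_
        by_cases h : ∀ e ∈ S, (Sym2.map x e).IsDiag <;> simp [h]

def prodSetEquiv {A B : Type*} (P : A → B → Prop) :
    ↥{xD : A × B | P xD.1 xD.2} ≃ (x : A) × {D : B // P x D} where
  toFun p := ⟨p.1.1, ⟨p.1.2, p.2⟩⟩
  invFun q := ⟨(q.1, q.2.1), q.2.2⟩
  left_inv p := rfl
  right_inv q := rfl

end StanleyRec


/-- Stanley's reciprocity theorem for the chromatic polynomial: up to the sign `(-1)^|V|`,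
the chromatic polynomial evaluated at `-k` counts pairs of a (not necessarily proper)
`k`-coloring `x` together with a compatible acyclic orientation `D` of the graph.

An orientation is encoded as a relation `D` supported on the edges of `G` that chooses
exactly one direction for each edge; acyclicity is irreflexivity of its transitive closure;
compatibility means colors weakly increase along directed edges. -/
theorem stanley_chromatic_reciprocity
    (V : Type*) [Fintype V] (G : SimpleGraph V) (χ : Polynomial ℤ)
    (hχ : ∀ k : ℕ, 0 < k →
      χ.eval (k : ℤ) =
        (Set.ncard {x : V → Fin k | ∀ v w, G.Adj v w → x v ≠ x w} : ℤ)) :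
    ∀ k : ℕ, 0 < k →
      (-1 : ℤ) ^ (Fintype.card V) * χ.eval (-(k : ℤ)) =
        (Set.ncard {xD : (V → Fin k) × (V → V → Prop) |
          (∀ v w, xD.2 v w → G.Adj v w) ∧
          (∀ v w, G.Adj v w → (xD.2 v w ↔ ¬ xD.2 w v)) ∧
          (∀ v, ¬ Relation.TransGen xD.2 v v) ∧
          (∀ v w, xD.2 v w → xD.1 v ≤ xD.1 w)} : ℤ) := by
  classical
  intro k hk
  open StanleyRec in
  have hχW : χ = W G := by
    refine poly_ext fun m hm => ?_
    rw [hχ m hm, W_eval_nat]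
    rw [← Nat.card_coe_set_eq]
    rfl
  have hRHS : (Set.ncard {xD : (V → Fin k) × (V → V → Prop) |
      (∀ v w, xD.2 v w → G.Adj v w) ∧
      (∀ v w, G.Adj v w → (xD.2 v w ↔ ¬ xD.2 w v)) ∧
      (∀ v, ¬ Relation.TransGen xD.2 v v) ∧
      (∀ v w, xD.2 v w → xD.1 v ≤ xD.1 w)} : ℤ)
      = ∑ x : V → Fin k, (Nat.card (orientSet (monoGraph G x)) : ℤ) := by
    rw [← Nat.card_coe_set_eq]
    rw [Nat.card_congr (prodSetEquiv (fun (x : V → Fin k) (D : V → V → Prop) =>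
      (∀ v w, D v w → G.Adj v w) ∧
      (∀ v w, G.Adj v w → (D v w ↔ ¬ D w v)) ∧
      (∀ v, ¬ Relation.TransGen D v v) ∧
      (∀ v w, D v w → x v ≤ x w)))]
    rw [Nat.card_eq_fintype_card, Fintype.card_sigma]
    push_cast
    refine Finset.sum_congr rfl fun x _ => ?_
    rw [← Nat.card_eq_fintype_card, Nat.card_congr (pairEquiv G x)]
  rw [hχW, hRHS, W_eval_neg, Finset.mul_sum]
  push_cast
  refine Finset.sum_congr rfl fun x _ => ?_
  rw [← Nat.card_eq_fintype_card]
  exact A_eq_a (Nat.card V) V (monoGraph G x) rfl
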